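/- The monic polynomial S̄₄(p,q,r,s;x) = x⁴ + 2((3q+s)/(5p+r))x² + ((3q+s)(q+s))/((5p+r)(3p+r)) satisfies the differential equation x²(px²+q)y'' + x(rx²+s)y' - 4(r+3p)x² y = 0. -/

import Mathlib

theorem stmt8 (p q r s : ℝ) (h5 : 5 * p + r ≠ 0) (h3 : 3 * p + r ≠ 0) :
    ∀ x : ℝ,
      x ^ 2 * (p * x ^ 2 + q) *
          deriv (deriv (fun t => t ^ 4 + 2 * ((3 * q + s) / (5 * p + r)) * t ^ 2 +
            ((3 * q + s) * (q + s)) / ((5 * p + r) * (3 * p + r)))) x +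
        x * (r * x ^ 2 + s) *
          deriv (fun t => t ^ 4 + 2 * ((3 * q + s) / (5 * p + r)) * t ^ 2 +
            ((3 * q + s) * (q + s)) / ((5 * p + r) * (3 * p + r))) x -
        4 * (r + 3 * p) * x ^ 2 *
          (x ^ 4 + 2 * ((3 * q + s) / (5 * p + r)) * x ^ 2 +
            ((3 * q + s) * (q + s)) / ((5 * p + r) * (3 * p + r))) = 0 := by
  intro x
  set a : ℝ := 2 * ((3 * q + s) / (5 * p + r)) with ha
  set c : ℝ := ((3 * q + s) * (q + s)) / ((5 * p + r) * (3 * p + r)) with hc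
  have hd1 : deriv (fun t : ℝ => t ^ 4 + a * t ^ 2 + c) = fun t => 4 * t ^ 3 + a * (2 * t) := by
    funext t
    have : HasDerivAt (fun t : ℝ => t ^ 4 + a * t ^ 2 + c) (4 * t ^ 3 + a * (2 * t)) t := by
      have h1 : HasDerivAt (fun t : ℝ => t ^ 4) (4 * t ^ 3) t := by
        simpa using (hasDerivAt_pow 4 t)
      have h2 : HasDerivAt (fun t : ℝ => t ^ 2) (2 * t) t := by
        simpa using (hasDerivAt_pow 2 t)
      simpa using ((h1.add (h2.const_mul a)).add_const c)
    exact this.deriv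
  have hd2 : deriv (fun t : ℝ => 4 * t ^ 3 + a * (2 * t)) x = 12 * x ^ 2 + 2 * a := by
    have : HasDerivAt (fun t : ℝ => 4 * t ^ 3 + a * (2 * t)) (12 * x ^ 2 + 2 * a) x := by
      have h1 : HasDerivAt (fun t : ℝ => t ^ 3) (3 * x ^ 2) x := by
        simpa using (hasDerivAt_pow 3 x)
      have h2 : HasDerivAt (fun t : ℝ => 2 * t) 2 x := by
        simpa using (hasDerivAt_id x).const_mul (2 : ℝ)
      have := (h1.const_mul (4 : ℝ)).add (h2.const_mul a)
      exact this.congr_deriv (by ring)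
    exact this.deriv
  rw [hd1, hd2]; simp only []
  have hu : a * (5 * p + r) = 2 * (3 * q + s) := by
    rw [ha]; field_simp
  have hc2 : c * (3 * p + r) = a / 2 * (q + s) := by
    rw [hc, ha]; field_simp
  linear_combination (-2 * x ^ 4) * hu + (-4 * x ^ 2) * hc2
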